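/- arXiv:2503.20762 — 3 statements merged into one kernel-verified Lean document; each statement's English description precedes it below -/
import Mathlib

section
/- Consider the deterministic Muon iteration without momentum: given a differentiable f : R^{m×n} → R that is 1-smooth with respect to ‖X‖_L = sqrt(tr(Xᵀ L X)) for a symmetric positive definite L ∈ R^{m×m} and bounded below by f^*, the update is W_{t+1} = W_t - η U_t V_tᵀ, where U_t S_t V_tᵀ is a compact singular value decomposition of ∇f(W_t) (U_t, V_t having orthonormal columns spanning the column and row spaces and S_t diagonal with the positive singular values). With constant step size η = sqrt( 2 (f(W_0) - f^*) / (‖L‖_* T) ), it holds that (1/T) Σ_{t=0}^{T-1} ‖∇f(W_t)‖_* ≤ sqrt( 2 ‖L‖_* (f(W_0) - f^*) / T ). -/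
open Matrix
open scoped Classical

/-- The positive semidefinite square root of a positive semidefinite real matrix
(junk value `0` if the matrix is not positive semidefinite). -/
noncomputable def psdSqrt {k : ℕ} (X : Matrix (Fin k) (Fin k) ℝ) : Matrix (Fin k) (Fin k) ℝ :=
  if h : X.PosSemidef then
    h.1.eigenvectorUnitary.1 * diagonal ((↑) ∘ (√·) ∘ h.1.eigenvalues) *
      (star h.1.eigenvectorUnitary : Matrix (Fin k) (Fin k) ℝ)
  else 0

/-- The trace (nuclear) norm of a real matrix: the sum of its singular values,
i.e. `tr((Aᵀ A)^{1/2})`. -/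
noncomputable def nuclearNorm {m n : ℕ} (A : Matrix (Fin m) (Fin n) ℝ) : ℝ :=
  (psdSqrt (Aᵀ * A)).trace

open scoped MatrixOrder in
lemma psdSqrt_eq_cfc {k : ℕ} {X : Matrix (Fin k) (Fin k) ℝ} (hX : X.PosSemidef) :
    psdSqrt X = CFC.sqrt X := by
  have h0 : (0 : Matrix (Fin k) (Fin k) ℝ) ≤ X := hX.nonneg
  rw [CFC.sqrt_eq_real_sqrt X h0, cfcₙ_eq_cfc, hX.1.cfc_eq, psdSqrt, dif_pos hX]
  simp [IsHermitian.cfc, Function.comp_def]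

open scoped MatrixOrder in
lemma psdSqrt_eq {k : ℕ} {X B : Matrix (Fin k) (Fin k) ℝ} (hX : X.PosSemidef)
    (hB : B.PosSemidef) (h : B * B = X) : psdSqrt X = B := by
  rw [psdSqrt_eq_cfc hX]
  exact CFC.sqrt_unique h hB.nonneg

open scoped MatrixOrder in
lemma psd_sqrt_exists {k : ℕ} {L : Matrix (Fin k) (Fin k) ℝ} (hL : L.PosSemidef) :
    ∃ R : Matrix (Fin k) (Fin k) ℝ, R.PosSemidef ∧ R * R = L :=
  ⟨CFC.sqrt L, (CFC.sqrt_nonneg L).posSemidef, CFC.sqrt_mul_sqrt_self L hL.nonneg⟩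

lemma real_conjT {a b : ℕ} (A : Matrix (Fin a) (Fin b) ℝ) : Aᴴ = Aᵀ := by
  ext i j; simp [conjTranspose]

lemma cancel_orth {a r : ℕ} {U : Matrix (Fin a) (Fin r) ℝ} (hU : Uᵀ * U = 1)
    {p : ℕ} (X : Matrix (Fin r) (Fin p) ℝ) : Uᵀ * (U * X) = X := by
  rw [← Matrix.mul_assoc, hU, Matrix.one_mul]

lemma trace_psd_nonneg {k : ℕ} {A : Matrix (Fin k) (Fin k) ℝ} (hA : A.PosSemidef) :
    0 ≤ A.trace := by
  rw [Matrix.trace]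
  apply Finset.sum_nonneg
  intro i _
  exact hA.diag_nonneg

lemma nuclear_svd {m n r : ℕ} (U : Matrix (Fin m) (Fin r) ℝ) (V : Matrix (Fin n) (Fin r) ℝ)
    (d : Fin r → ℝ) (hU : Uᵀ * U = 1) (hV : Vᵀ * V = 1) (hd : ∀ i, 0 ≤ d i) :
    nuclearNorm (U * diagonal d * Vᵀ) = (diagonal d).trace := by
  have hprod : (U * diagonal d * Vᵀ)ᵀ * (U * diagonal d * Vᵀ)
      = V * (diagonal d * diagonal d) * Vᵀ := by
    simp only [Matrix.transpose_mul, Matrix.transpose_transpose, diagonal_transpose]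
    simp only [Matrix.mul_assoc, cancel_orth hU]
  have hpsd : (V * diagonal d * Vᵀ).PosSemidef := by
    have := (Matrix.PosSemidef.diagonal (R := ℝ) (n := Fin r) hd).mul_mul_conjTranspose_same V
    simpa [real_conjT] using this
  have hsq : (V * diagonal d * Vᵀ) * (V * diagonal d * Vᵀ) = (U * diagonal d * Vᵀ)ᵀ * (U * diagonal d * Vᵀ) := by
    rw [hprod]
    simp only [Matrix.mul_assoc, cancel_orth hV]
  have h1 : psdSqrt ((U * diagonal d * Vᵀ)ᵀ * (U * diagonal d * Vᵀ)) = V * diagonal d * Vᵀ := by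
    apply psdSqrt_eq _ hpsd hsq
    have := Matrix.posSemidef_conjTranspose_mul_self (U * diagonal d * Vᵀ)
    simpa [real_conjT] using this
  rw [nuclearNorm, h1, Matrix.trace_mul_cycle, hV, one_mul]
-- nuclearNorm of PosDef equals trace
lemma nuclear_posdef {k : ℕ} {L : Matrix (Fin k) (Fin k) ℝ} (hL : L.PosDef) :
    nuclearNorm L = L.trace := by
  have hH : Lᵀ = L := by rw [← real_conjT]; exact hL.isHermitian
  have hX : (Lᵀ * L).PosSemidef := by
    have := Matrix.posSemidef_conjTranspose_mul_self L
    rwa [real_conjT] at this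
  rw [nuclearNorm, psdSqrt_eq hX hL.posSemidef (by rw [hH])]

-- trace bound: tr((UVᵀ)ᵀ L (UVᵀ)) ≤ tr L
lemma trace_bound {m n r : ℕ} {L : Matrix (Fin m) (Fin m) ℝ} (hL : L.PosDef)
    (U : Matrix (Fin m) (Fin r) ℝ) (V : Matrix (Fin n) (Fin r) ℝ)
    (hU : Uᵀ * U = 1) (hV : Vᵀ * V = 1) :
    ((U * Vᵀ)ᵀ * L * (U * Vᵀ)).trace ≤ L.trace := by
  have hH : Lᵀ = L := by rw [← real_conjT]; exact hL.isHermitian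
  -- reduce to tr(Uᵀ L U)
  have h1 : ((U * Vᵀ)ᵀ * L * (U * Vᵀ)).trace = (Uᵀ * L * U).trace := by
    have : (U * Vᵀ)ᵀ * L * (U * Vᵀ) = V * (Uᵀ * L * U) * Vᵀ := by
      simp only [Matrix.transpose_mul, Matrix.transpose_transpose, Matrix.mul_assoc]
    rw [this, Matrix.trace_mul_cycle, ← Matrix.mul_assoc, hV, Matrix.one_mul]
  rw [h1]
  -- P = U Uᵀ, 1 - P is PSD
  set P := U * Uᵀ with hP
  have hPt : Pᵀ = P := by rw [hP, Matrix.transpose_mul, Matrix.transpose_transpose]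
  have hPP : P * P = P := by
    rw [hP, Matrix.mul_assoc, ← Matrix.mul_assoc Uᵀ, hU, Matrix.one_mul]
  have hQ : (1 - P).PosSemidef := by
    have hsq : (1 - P)ᴴ * (1 - P) = 1 - P := by
      rw [real_conjT, Matrix.transpose_sub, Matrix.transpose_one, hPt]
      rw [Matrix.sub_mul, Matrix.mul_sub, Matrix.mul_sub, hPP]
      simp
    have := Matrix.posSemidef_conjTranspose_mul_self (1 - P)
    rwa [hsq] at this
  -- R = sqrt L
  obtain ⟨R, hRpsd, hRR⟩ := psd_sqrt_exists hL.posSemidef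
  have hRt : Rᵀ = R := by rw [← real_conjT]; exact hRpsd.isHermitian
  have key : 0 ≤ (L * (1 - P)).trace := by
    have h2 : (L * (1 - P)).trace = (Rᵀ * ((1 - P) * R)).trace := by
      rw [hRt, ← hRR]
      rw [Matrix.trace_mul_cycle R R ((1-P)), ← Matrix.mul_assoc, Matrix.trace_mul_comm, Matrix.mul_assoc]
    rw [h2]
    apply trace_psd_nonneg
    have := hQ.conjTranspose_mul_mul_same R
    rw [real_conjT] at this
    rw [Matrix.mul_assoc] at this
    exact this
  have h3 : (Uᵀ * L * U).trace = (L * P).trace := by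
    rw [Matrix.trace_mul_cycle Uᵀ L U, Matrix.trace_mul_comm L P, hP]
  have h4 : (L * (1 - P)).trace = L.trace - (L * P).trace := by
    rw [Matrix.mul_sub, Matrix.mul_one, Matrix.trace_sub]
  rw [h3]; linarith [key, h4.symm.le, h4.le]

lemma trace_grad_dir {m n r : ℕ} (U : Matrix (Fin m) (Fin r) ℝ) (V : Matrix (Fin n) (Fin r) ℝ)
    (d : Fin r → ℝ) (hU : Uᵀ * U = 1) (hV : Vᵀ * V = 1) :
    ((U * diagonal d * Vᵀ)ᵀ * (U * Vᵀ)).trace = (diagonal d).trace := by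
  have h : (U * diagonal d * Vᵀ)ᵀ * (U * Vᵀ) = V * diagonal d * Vᵀ := by
    simp only [Matrix.transpose_mul, Matrix.transpose_transpose, diagonal_transpose,
      Matrix.mul_assoc, cancel_orth hU]
  rw [h, Matrix.trace_mul_cycle, hV, Matrix.one_mul]

lemma nuclearNorm_zero_rows {n : ℕ} (A : Matrix (Fin 0) (Fin n) ℝ) : nuclearNorm A = 0 := by
  have h : Aᵀ * A = 0 := by ext i j; simp [Matrix.mul_apply]
  rw [nuclearNorm, h, psdSqrt_eq Matrix.PosSemidef.zero Matrix.PosSemidef.zero (by simp),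
    Matrix.trace_zero]

lemma trace_zero_dim (A : Matrix (Fin 0) (Fin 0) ℝ) : A.trace = 0 := by
  simp [Matrix.trace]
/-- deterministic Muon iteration without momentum. Let `f : ℝ^{m×n} → ℝ`
be differentiable with gradient `gradf`, `1`-smooth with respect to
`‖X‖_L = sqrt(tr(Xᵀ L X))` for a symmetric positive definite `L ∈ ℝ^{m×m}`
(i.e. `f(Y) ≤ f(X) + ⟨∇f(X), Y - X⟩ + (1/2)‖Y - X‖_L²`), and bounded below by `f^*`.
The update is `W_{t+1} = W_t - η U_t V_tᵀ` where `U_t S_t V_tᵀ` is a compact SVD of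
`∇f(W_t)` (`U_t`, `V_t` with orthonormal columns, `S_t` diagonal with the positive
singular values), with constant step size `η = sqrt(2 (f(W_0) - f^*) / (‖L‖_* T))`.
Then `(1/T) ∑_{t<T} ‖∇f(W_t)‖_* ≤ sqrt(2 ‖L‖_* (f(W_0) - f^*) / T)`. -/
theorem stmt3 (m n T : ℕ) (hT : 0 < T)
    (f : Matrix (Fin m) (Fin n) ℝ → ℝ)
    (gradf : Matrix (Fin m) (Fin n) ℝ → Matrix (Fin m) (Fin n) ℝ)
    (L : Matrix (Fin m) (Fin m) ℝ) (hL : L.PosDef)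
    (hsmooth : ∀ X Y : Matrix (Fin m) (Fin n) ℝ,
      f Y ≤ f X + ((gradf X)ᵀ * (Y - X)).trace + (1 / 2) * ((Y - X)ᵀ * L * (Y - X)).trace)
    (fstar : ℝ) (hlb : ∀ Wmat, fstar ≤ f Wmat)
    (W : ℕ → Matrix (Fin m) (Fin n) ℝ)
    (η : ℝ) (hη : η = Real.sqrt (2 * (f (W 0) - fstar) / (nuclearNorm L * T)))
    (hupd : ∀ t, ∃ (r : ℕ) (U : Matrix (Fin m) (Fin r) ℝ) (S : Matrix (Fin r) (Fin r) ℝ)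
        (V : Matrix (Fin n) (Fin r) ℝ),
      Uᵀ * U = 1 ∧ Vᵀ * V = 1 ∧
      (∃ d : Fin r → ℝ, (∀ i, 0 < d i) ∧ S = Matrix.diagonal d) ∧
      gradf (W t) = U * S * Vᵀ ∧
      W (t + 1) = W t - η • (U * Vᵀ)) :
    (1 / (T : ℝ)) * ∑ t ∈ Finset.range T, nuclearNorm (gradf (W t)) ≤
      Real.sqrt (2 * nuclearNorm L * (f (W 0) - fstar) / T) := by
  have hTpos : (0:ℝ) < T := by exact_mod_cast hT
  have hΔ : 0 ≤ f (W 0) - fstar := by linarith [hlb (W 0)]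
  have hNn : ∀ t, 0 ≤ nuclearNorm (gradf (W t)) := by
    intro t
    obtain ⟨r, U, S, V, hU, hV, ⟨d, hd, hS⟩, hG, hW⟩ := hupd t
    subst hS
    rw [hG, nuclear_svd U V d hU hV (fun i => (hd i).le), Matrix.trace_diagonal]
    exact Finset.sum_nonneg fun i _ => (hd i).le
  rcases Nat.eq_zero_or_pos m with hm | hm
  · -- m = 0 : everything degenerates
    subst hm
    have hL0 : nuclearNorm L = 0 := by
      rw [nuclearNorm]; exact trace_zero_dim _
    have hsum : ∑ t ∈ Finset.range T, nuclearNorm (gradf (W t)) = 0 :=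
      Finset.sum_eq_zero fun t _ => nuclearNorm_zero_rows _
    rw [hsum, hL0, mul_zero]
    exact Real.sqrt_nonneg _
  · -- m > 0
    have hKpos : 0 < L.trace := by
      rw [Matrix.trace]
      apply Finset.sum_pos
      · intro i _
        have hx : (Pi.single i 1 : Fin m → ℝ) ≠ 0 := by
          intro h
          have := congrFun h i
          simp at this
        exact hL.diag_pos
      · exact ⟨⟨0, hm⟩, Finset.mem_univ _⟩
    have hKtr : nuclearNorm L = L.trace := nuclear_posdef hL
    -- per-step descent
    have step : ∀ t, f (W (t+1)) ≤ f (W t) - η * nuclearNorm (gradf (W t))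
        + η^2/2 * L.trace := by
      intro t
      obtain ⟨r, U, S, V, hU, hV, ⟨d, hd, hS⟩, hG, hW⟩ := hupd t
      subst hS
      have hsm := hsmooth (W t) (W (t+1))
      have hdiff : W (t+1) - W t = -(η • (U * Vᵀ)) := by rw [hW]; abel
      rw [hdiff, hG] at hsm
      have e1 : ((U * diagonal d * Vᵀ)ᵀ * -(η • (U * Vᵀ))).trace
          = -(η * (diagonal d).trace) := by
        rw [Matrix.mul_neg, Matrix.mul_smul, Matrix.trace_neg, Matrix.trace_smul,
          trace_grad_dir U V d hU hV, smul_eq_mul]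
      have e2 : ((-(η • (U * Vᵀ)))ᵀ * L * -(η • (U * Vᵀ))).trace
          = η^2 * ((U * Vᵀ)ᵀ * L * (U * Vᵀ)).trace := by
        rw [Matrix.transpose_neg, Matrix.transpose_smul]
        rw [Matrix.neg_mul, Matrix.mul_neg, Matrix.neg_mul, neg_neg]
        rw [Matrix.smul_mul, Matrix.smul_mul, Matrix.mul_smul, smul_smul]
        rw [Matrix.trace_smul, smul_eq_mul, pow_two]
      have e3 : nuclearNorm (gradf (W t)) = (diagonal d).trace := by
        rw [hG]; exact nuclear_svd U V d hU hV (fun i => (hd i).le)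
      have e4 := trace_bound hL U V hU hV
      have e5 : 0 ≤ ((U * Vᵀ)ᵀ * L * (U * Vᵀ)).trace := by
        apply trace_psd_nonneg
        have := hL.posSemidef.conjTranspose_mul_mul_same (U * Vᵀ)
        rwa [real_conjT] at this
      rw [e1, e2] at hsm
      rw [e3]
      nlinarith [sq_nonneg η]
    -- telescoping
    have tele : ∀ s : ℕ, η * ∑ t ∈ Finset.range s, nuclearNorm (gradf (W t))
        ≤ f (W 0) - f (W s) + s * (η^2/2 * L.trace) := by
      intro s
      induction s with
      | zero => simp
      | succ s ih =>
        rw [Finset.sum_range_succ, mul_add]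
        have hs := step s
        push_cast
        linarith
    rcases eq_or_lt_of_le hΔ with hΔ0 | hΔpos
    · -- f (W 0) = fstar : all gradients vanish
      have hη0 : η = 0 := by
        rw [hη, ← hΔ0]
        simp
      have hWconst : ∀ t, W t = W 0 := by
        intro t
        induction t with
        | zero => rfl
        | succ t ih =>
          obtain ⟨r, U, S, V, hU, hV, hSd, hG, hW⟩ := hupd t
          rw [hW, hη0, zero_smul, sub_zero, ih]
      have hN0 : ∀ t, nuclearNorm (gradf (W t)) = 0 := by
        intro t
        obtain ⟨r, U, S, V, hU, hV, ⟨d, hd, hS⟩, hG, hW⟩ := hupd t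
        subst hS
        have hft : f (W t) = fstar := by rw [hWconst t]; linarith
        have e3 : nuclearNorm (gradf (W t)) = (diagonal d).trace := by
          rw [hG]; exact nuclear_svd U V d hU hV (fun i => (hd i).le)
        have key : ∀ s : ℝ, 0 < s → (diagonal d).trace ≤ s * L.trace / 2 := by
          intro s hs
          have hsm := hsmooth (W t) (W t - s • (U * Vᵀ))
          have hdiff : W t - s • (U * Vᵀ) - W t = -(s • (U * Vᵀ)) := by abel
          rw [hdiff, hG] at hsm
          have e1 : ((U * diagonal d * Vᵀ)ᵀ * -(s • (U * Vᵀ))).trace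
              = -(s * (diagonal d).trace) := by
            rw [Matrix.mul_neg, Matrix.mul_smul, Matrix.trace_neg, Matrix.trace_smul,
              trace_grad_dir U V d hU hV, smul_eq_mul]
          have e2 : ((-(s • (U * Vᵀ)))ᵀ * L * -(s • (U * Vᵀ))).trace
              = s^2 * ((U * Vᵀ)ᵀ * L * (U * Vᵀ)).trace := by
            rw [Matrix.transpose_neg, Matrix.transpose_smul]
            rw [Matrix.neg_mul, Matrix.mul_neg, Matrix.neg_mul, neg_neg]
            rw [Matrix.smul_mul, Matrix.smul_mul, Matrix.mul_smul, smul_smul]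
            rw [Matrix.trace_smul, smul_eq_mul, pow_two]
          rw [e1, e2, hft] at hsm
          have e4 := trace_bound hL U V hU hV
          have hlow := hlb (W t - s • (U * Vᵀ))
          nlinarith [sq_nonneg s]
        have hle : (diagonal d).trace ≤ 0 := by
          by_contra hpos
          push_neg at hpos
          have hk := key ((diagonal d).trace / L.trace) (div_pos hpos hKpos)
          have h2 : (diagonal d).trace / L.trace * L.trace = (diagonal d).trace := by
            field_simp
          rw [h2] at hk
          linarith
        have hge : 0 ≤ (diagonal d).trace := by
          rw [Matrix.trace_diagonal]
          exact Finset.sum_nonneg fun i _ => (hd i).le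
        rw [e3]; linarith
      have hsum : ∑ t ∈ Finset.range T, nuclearNorm (gradf (W t)) = 0 :=
        Finset.sum_eq_zero fun t _ => hN0 t
      rw [hsum, mul_zero]
      exact Real.sqrt_nonneg _
    · -- main case: Δ > 0
      set Δ := f (W 0) - fstar with hΔdef
      set K := nuclearNorm L with hKdef
      have hKp : 0 < K := by rw [hKtr]; exact hKpos
      have harg : 0 < 2 * Δ / (K * T) := by positivity
      have hηpos : 0 < η := by rw [hη]; exact Real.sqrt_pos.mpr harg
      have hηsq : η^2 = 2 * Δ / (K * T) := by
        rw [hη, Real.sq_sqrt harg.le]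
      have hteleT := tele T
      have hfT := hlb (W T)
      have hmid : (T:ℝ) * (η^2/2 * L.trace) = Δ := by
        rw [hηsq, ← hKtr]
        field_simp
      have hsumle : ∑ t ∈ Finset.range T, nuclearNorm (gradf (W t)) ≤ 2 * Δ / η := by
        rw [le_div_iff₀ hηpos, mul_comm]
        calc η * ∑ t ∈ Finset.range T, nuclearNorm (gradf (W t))
            ≤ f (W 0) - f (W T) + T * (η^2/2 * L.trace) := hteleT
          _ ≤ Δ + Δ := by rw [hmid]; simp only [hΔdef]; linarith
          _ = 2 * Δ := by ring
      have hrhs : Real.sqrt (2 * K * Δ / T) = 2 * Δ / (T * η) := by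
        have ha : 0 < 2 * Δ / (T * η) := by positivity
        have ha2 : (2 * Δ / (T * η))^2 = 2 * K * Δ / T := by
          rw [div_pow, mul_pow, mul_pow, hηsq]
          field_simp
        rw [← ha2, Real.sqrt_sq ha.le]
      rw [hrhs]
      rw [div_mul_eq_mul_div, one_mul, div_le_div_iff₀ hTpos (by positivity : (0:ℝ) < T * η)]
      calc (∑ t ∈ Finset.range T, nuclearNorm (gradf (W t))) * (T * η)
          = ((∑ t ∈ Finset.range T, nuclearNorm (gradf (W t))) * η) * T := by ring
        _ ≤ (2 * Δ / η * η) * T := by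
            apply mul_le_mul_of_nonneg_right _ hTpos.le
            exact mul_le_mul_of_nonneg_right hsumle hηpos.le
        _ = 2 * Δ * T := by field_simp
end

section
/- For symmetric positive definite matrices X, Y ∈ R^{m×m}, it holds that tr((X + Y)^{1/2}) ≤ tr(X^{1/2}) + tr(Y^{1/2}). -/
open Matrix
open scoped Classical

namespace Matrix.PosSemidef

noncomputable def sqrt {k : ℕ} {X : Matrix (Fin k) (Fin k) ℝ} (h : X.PosSemidef) :
    Matrix (Fin k) (Fin k) ℝ :=
  h.1.eigenvectorUnitary.1 * diagonal ((↑) ∘ (√·) ∘ h.1.eigenvalues) *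
    (star h.1.eigenvectorUnitary : Matrix (Fin k) (Fin k) ℝ)

lemma psdSqrt_eq {k : ℕ} {X : Matrix (Fin k) (Fin k) ℝ} (h : X.PosSemidef) :
    psdSqrt X = h.sqrt := by
  rw [psdSqrt, dif_pos h]; rfl

lemma posSemidef_sqrt {k : ℕ} {X : Matrix (Fin k) (Fin k) ℝ} (h : X.PosSemidef) :
    h.sqrt.PosSemidef := by
  have hd : (diagonal ((↑) ∘ (√·) ∘ h.1.eigenvalues) : Matrix (Fin k) (Fin k) ℝ).PosSemidef :=
    PosSemidef.diagonal fun i => Real.sqrt_nonneg _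
  exact hd.mul_mul_conjTranspose_same _

lemma sqrt_mul_self {k : ℕ} {X : Matrix (Fin k) (Fin k) ℝ} (h : X.PosSemidef) :
    h.sqrt * h.sqrt = X := by
  have hU : (star h.1.eigenvectorUnitary : Matrix (Fin k) (Fin k) ℝ) * h.1.eigenvectorUnitary.1
      = 1 := Unitary.coe_star_mul_self _
  have hD : (diagonal ((↑) ∘ (√·) ∘ h.1.eigenvalues) : Matrix (Fin k) (Fin k) ℝ) *
      diagonal ((↑) ∘ (√·) ∘ h.1.eigenvalues) = diagonal (RCLike.ofReal ∘ h.1.eigenvalues) := by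
    rw [diagonal_mul_diagonal]
    congr 1
    funext i
    simp [Real.mul_self_sqrt (h.eigenvalues_nonneg i)]
  conv_rhs => rw [h.1.spectral_theorem, Unitary.conjStarAlgAut_apply]
  unfold sqrt
  rw [← hD]
  simp only [Matrix.mul_assoc]
  rw [← Matrix.mul_assoc (star h.1.eigenvectorUnitary : Matrix (Fin k) (Fin k) ℝ), hU,
    Matrix.one_mul]

end Matrix.PosSemidef

section aux

variable {m : ℕ}

/-- If `1 - Kᵀ * K` is PSD, then `v ⬝ᵥ K *ᵥ v ≤ v ⬝ᵥ v`. -/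
lemma quad_le_of_contraction {K : Matrix (Fin m) (Fin m) ℝ}
    (h : (1 - Kᵀ * K).PosSemidef) (v : Fin m → ℝ) :
    v ⬝ᵥ (K *ᵥ v) ≤ v ⬝ᵥ v := by
  have h1 : (K *ᵥ v) ⬝ᵥ (K *ᵥ v) ≤ v ⬝ᵥ v := by
    have := h.dotProduct_mulVec_nonneg v
    simp only [star_trivial, sub_mulVec, one_mulVec, dotProduct_sub, ← mulVec_mulVec,
      dotProduct_mulVec, vecMul_transpose] at this
    rw [← dotProduct_mulVec] at this
    linarith
  have h2 : 0 ≤ (v - K *ᵥ v) ⬝ᵥ (v - K *ᵥ v) := by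
    simp only [dotProduct, ← sq]
    exact Finset.sum_nonneg fun i _ => sq_nonneg _
  have h3 : (K *ᵥ v) ⬝ᵥ v = v ⬝ᵥ (K *ᵥ v) := dotProduct_comm _ _
  simp only [dotProduct_sub, sub_dotProduct] at h2
  linarith

/-- Key lemma, abstract form: if `S² = Z`, `R² = X`, `Q² = R`, `S` invertible,
`X ≤ Z` (Loewner), then `tr (S⁻¹ * X) ≤ tr R`. -/
lemma trace_inv_mul_le {Z X S R Q : Matrix (Fin m) (Fin m) ℝ}
    (hSh : S.IsHermitian) (hSS : S * S = Z) (hSunit : IsUnit S.det)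
    (hRh : R.IsHermitian) (hRR : R * R = X)
    (hQh : Q.IsHermitian) (hQQ : Q * Q = R)
    (hle : (Z - X).PosSemidef) :
    (S⁻¹ * X).trace ≤ R.trace := by
  have hSinv : S * S⁻¹ = 1 := mul_nonsing_inv _ hSunit
  have hSinv' : S⁻¹ * S = 1 := nonsing_inv_mul _ hSunit
  have hSih : S⁻¹.IsHermitian := hSh.inv
  have hQs : ∀ a b, Q a b = Q b a := fun a b => by
    conv_lhs => rw [← hQh]
    simp [conjTranspose_apply]
  set K := R * S⁻¹ with hKdef
  -- contraction property
  have hcontr : (1 - Kᵀ * K).PosSemidef := by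
    have hKt : Kᵀ = S⁻¹ * R := by
      rw [hKdef, transpose_mul, ← conjTranspose_eq_transpose_of_trivial,
        ← conjTranspose_eq_transpose_of_trivial, hSih.eq, hRh.eq]
    have hZ1 : S⁻¹ * Z * S⁻¹ = 1 := by
      rw [← hSS, ← Matrix.mul_assoc, hSinv', Matrix.one_mul, hSinv]
    have hKK : Kᵀ * K = S⁻¹ * X * S⁻¹ := by
      rw [hKt, hKdef, Matrix.mul_assoc S⁻¹ R, ← Matrix.mul_assoc R R, hRR,
        ← Matrix.mul_assoc]
    have hform : 1 - Kᵀ * K = S⁻¹ * (Z - X) * S⁻¹ := by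
      rw [hKK, Matrix.mul_sub, Matrix.sub_mul, hZ1]
    rw [hform]
    have := hle.mul_mul_conjTranspose_same S⁻¹
    rwa [hSih.eq] at this
  -- reduce the trace to entries
  have htr : (S⁻¹ * X).trace = (Q * K * Q).trace := by
    calc (S⁻¹ * X).trace = (R * K).trace := by
          rw [← hRR, hKdef, trace_mul_comm]
          congr 1
          rw [Matrix.mul_assoc]
      _ = (Q * K * Q).trace := by
          rw [← hQQ, Matrix.mul_assoc, trace_mul_comm]
  have hent : ∀ i, (Q * K * Q) i i ≤ (Q * Q) i i := by
    intro i
    have key := quad_le_of_contraction hcontr (fun j => Q j i)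
    have e1 : (Q * K * Q) i i = (fun j => Q j i) ⬝ᵥ (K *ᵥ fun j => Q j i) := by
      simp only [Matrix.mul_apply, dotProduct, Matrix.mulVec, Finset.sum_mul, Finset.mul_sum]
      rw [Finset.sum_comm]
      refine Finset.sum_congr rfl fun k _ => Finset.sum_congr rfl fun j _ => ?_
      rw [hQs i k]; ring
    have e2 : (Q * Q) i i = (fun j => Q j i) ⬝ᵥ (fun j => Q j i) := by
      simp only [Matrix.mul_apply, dotProduct]
      exact Finset.sum_congr rfl fun j _ => by rw [hQs i j]
    rw [e1, e2]
    exact key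
  have hfin : (Q * K * Q).trace ≤ (Q * Q).trace := by
    simp only [Matrix.trace, Matrix.diag]
    exact Finset.sum_le_sum fun i _ => hent i
  rw [htr]
  calc (Q * K * Q).trace ≤ (Q * Q).trace := hfin
    _ = R.trace := by rw [hQQ]

/-- Invertibility of the square root of a positive definite matrix. -/
lemma isUnit_det_of_sq {Z S : Matrix (Fin m) (Fin m) ℝ} (hZ : Z.PosDef)
    (hSS : S * S = Z) : IsUnit S.det := by
  have h : S.det * S.det = Z.det := by rw [← det_mul, hSS]
  have hzd := hZ.det_pos
  refine isUnit_iff_ne_zero.2 fun hd => ?_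
  rw [hd, mul_zero] at h
  linarith [h ▸ hzd]

end aux

/-- for symmetric positive definite matrices `X, Y ∈ ℝ^{m×m}`,
`tr((X + Y)^{1/2}) ≤ tr(X^{1/2}) + tr(Y^{1/2})`. -/
theorem stmt5 (m : ℕ) (X Y : Matrix (Fin m) (Fin m) ℝ) (hX : X.PosDef) (hY : Y.PosDef) :
    (psdSqrt (X + Y)).trace ≤ (psdSqrt X).trace + (psdSqrt Y).trace := by
  have hZ : (X + Y).PosDef := hX.add hY
  rw [PosSemidef.psdSqrt_eq hZ.posSemidef, PosSemidef.psdSqrt_eq hX.posSemidef,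
    PosSemidef.psdSqrt_eq hY.posSemidef]
  -- abbreviations, kept abstract
  obtain ⟨S, hSh, hSS⟩ : ∃ S : Matrix (Fin m) (Fin m) ℝ,
      S.IsHermitian ∧ S * S = X + Y ∧ S = hZ.posSemidef.sqrt :=
    ⟨hZ.posSemidef.sqrt, hZ.posSemidef.posSemidef_sqrt.1, hZ.posSemidef.sqrt_mul_self, rfl⟩
  obtain ⟨hSS, hSeq⟩ := hSS
  obtain ⟨RX, hRXh, hRXX, hRXeq⟩ : ∃ R : Matrix (Fin m) (Fin m) ℝ,
      R.IsHermitian ∧ R * R = X ∧ R = hX.posSemidef.sqrt :=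
    ⟨hX.posSemidef.sqrt, hX.posSemidef.posSemidef_sqrt.1, hX.posSemidef.sqrt_mul_self, rfl⟩
  obtain ⟨RY, hRYh, hRYY, hRYeq⟩ : ∃ R : Matrix (Fin m) (Fin m) ℝ,
      R.IsHermitian ∧ R * R = Y ∧ R = hY.posSemidef.sqrt :=
    ⟨hY.posSemidef.sqrt, hY.posSemidef.posSemidef_sqrt.1, hY.posSemidef.sqrt_mul_self, rfl⟩
  have hRXpsd : RX.PosSemidef := hRXeq ▸ hX.posSemidef.posSemidef_sqrt
  have hRYpsd : RY.PosSemidef := hRYeq ▸ hY.posSemidef.posSemidef_sqrt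
  have hSunit : IsUnit S.det := isUnit_det_of_sq hZ hSS
  have hSinv : S * S⁻¹ = 1 := mul_nonsing_inv _ hSunit
  rw [← hSeq, ← hRXeq, ← hRYeq]
  have htrS : S.trace = (S⁻¹ * X).trace + (S⁻¹ * Y).trace := by
    have e : (X + Y) * S⁻¹ = S := by
      rw [← hSS, Matrix.mul_assoc, hSinv, Matrix.mul_one]
    calc S.trace = ((X + Y) * S⁻¹).trace := by rw [e]
      _ = (S⁻¹ * (X + Y)).trace := trace_mul_comm _ _
      _ = (S⁻¹ * X).trace + (S⁻¹ * Y).trace := by rw [Matrix.mul_add, trace_add]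
  have h1 : (S⁻¹ * X).trace ≤ RX.trace :=
    trace_inv_mul_le hSh hSS hSunit hRXh hRXX hRXpsd.posSemidef_sqrt.1
      hRXpsd.sqrt_mul_self (by simpa using hY.posSemidef)
  have h2 : (S⁻¹ * Y).trace ≤ RY.trace :=
    trace_inv_mul_le hSh hSS hSunit hRYh hRYY hRYpsd.posSemidef_sqrt.1
      hRYpsd.sqrt_mul_self (by simpa using hX.posSemidef)
  rw [htrS]
  exact add_le_add h1 h2
end

section
/- For a symmetric positive definite matrix Λ ∈ R^{m×m} and any matrix G ∈ R^{m×n}, it holds that ‖G‖_* ≤ sqrt( ‖Λ‖_* · tr(Gᵀ Λ^{-1} G) ), where ‖Λ‖_* = tr(Λ). -/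
open Matrix
open scoped Classical

section PsdSqrtHelpers
open scoped MatrixOrder

lemma psdSqrt_eq_sqrt {k : ℕ} {X : Matrix (Fin k) (Fin k) ℝ} (h : X.PosSemidef) :
    psdSqrt X = CFC.sqrt X := by
  have h0 : 0 ≤ X := Matrix.nonneg_iff_posSemidef.mpr h
  rw [CFC.sqrt_eq_real_sqrt X h0, cfcₙ_eq_cfc, h.1.cfc_eq, psdSqrt, dif_pos h,
    IsHermitian.cfc, Unitary.conjStarAlgAut_apply]
  rfl

lemma psdSqrt_posSemidef {k : ℕ} {X : Matrix (Fin k) (Fin k) ℝ} (h : X.PosSemidef) :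
    (psdSqrt X).PosSemidef := by
  rw [psdSqrt_eq_sqrt h, ← Matrix.nonneg_iff_posSemidef]
  exact CFC.sqrt_nonneg X

lemma psdSqrt_mul_self {k : ℕ} {X : Matrix (Fin k) (Fin k) ℝ} (h : X.PosSemidef) :
    psdSqrt X * psdSqrt X = X := by
  rw [psdSqrt_eq_sqrt h]
  exact CFC.sqrt_mul_sqrt_self X (Matrix.nonneg_iff_posSemidef.mpr h)

lemma eq_psdSqrt_of_sq_eq {k : ℕ} {B X : Matrix (Fin k) (Fin k) ℝ} (hB : B.PosSemidef)
    (hX : X.PosSemidef) (hBX : B ^ 2 = X) : B = psdSqrt X := by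
  rw [psdSqrt_eq_sqrt hX, ← hBX, CFC.sqrt_sq B (Matrix.nonneg_iff_posSemidef.mpr hB)]

end PsdSqrtHelpers

section Helpers

variable {m n : ℕ}

lemma dot_self_nonneg' (x : Fin m → ℝ) : 0 ≤ x ⬝ᵥ x :=
  Finset.sum_nonneg fun i _ => mul_self_nonneg _

/-- Cauchy–Schwarz for real dot products. -/
lemma dot_le_sqrt (a b : Fin m → ℝ) :
    a ⬝ᵥ b ≤ Real.sqrt (a ⬝ᵥ a) * Real.sqrt (b ⬝ᵥ b) := by
  have h := Finset.sum_mul_sq_le_sq_mul_sq Finset.univ a b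
  calc a ⬝ᵥ b ≤ √((a ⬝ᵥ b)^2) := by
        rw [Real.sqrt_sq_eq_abs]; exact le_abs_self _
    _ ≤ √((a ⬝ᵥ a) * (b ⬝ᵥ b)) := by
        apply Real.sqrt_le_sqrt
        simpa [dotProduct, pow_two] using h
    _ = _ := Real.sqrt_mul (dot_self_nonneg' a) _

/-- The trace of a matrix as a sum of quadratic forms over the columns of an
orthogonal matrix. -/
lemma trace_eq_sum_col (V : Matrix (Fin n) (Fin n) ℝ) (hV : Vᵀ * V = 1)
    (M : Matrix (Fin n) (Fin n) ℝ) :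
    ∑ j, (fun i => V i j) ⬝ᵥ (M *ᵥ fun i => V i j) = M.trace := by
  have h1 : V * Vᵀ = 1 := mul_eq_one_comm.mp hV
  have h2 : (Vᵀ * M * V).trace = M.trace := by
    rw [Matrix.trace_mul_cycle, h1, Matrix.one_mul]
  rw [← h2, Matrix.mul_assoc, Matrix.trace]
  apply Finset.sum_congr rfl
  intro j _
  simp [Matrix.diag, Matrix.mul_apply, dotProduct, Matrix.mulVec, Matrix.transpose_apply]

/-- Bessel-type inequality: for an orthonormal family `u` and a symmetric matrix `R`,
`∑ ‖R u j‖² ≤ tr (R * R)`. -/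
lemma bessel_matrix (R : Matrix (Fin m) (Fin m) ℝ) (hR : Rᵀ = R)
    {ι : Type*} [Fintype ι] [DecidableEq ι] (u : ι → Fin m → ℝ)
    (hu : ∀ i j, u i ⬝ᵥ u j = if i = j then 1 else 0) :
    ∑ j, (R *ᵥ u j) ⬝ᵥ (R *ᵥ u j) ≤ (R * R).trace := by
  set w : ι → EuclideanSpace ℝ (Fin m) := fun j => WithLp.toLp 2 (u j) with hw
  have hortho : Orthonormal ℝ w := by
    rw [orthonormal_iff_ite]
    intro i j
    simpa [PiLp.inner_apply, dotProduct, hw, mul_comm] using hu i j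
  have key : ∀ k : Fin m, ∑ j, ((R *ᵥ u j) k)^2 ≤ ∑ i, (R k i)^2 := by
    intro k
    set r : EuclideanSpace ℝ (Fin m) := WithLp.toLp 2 (fun i => R k i) with hr
    have hb := hortho.sum_inner_products_le (s := Finset.univ) r
    calc ∑ j, ((R *ᵥ u j) k)^2 = ∑ j, ‖(inner ℝ (w j) r : ℝ)‖^2 := by
          apply Finset.sum_congr rfl
          intro j _
          rw [Real.norm_eq_abs, sq_abs]
          congr 1
      _ ≤ ‖r‖^2 := hb
      _ = ∑ i, (R k i)^2 := by
          rw [EuclideanSpace.norm_eq, Real.sq_sqrt (Finset.sum_nonneg fun i _ => sq_nonneg _)]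
          simp [hr]
  calc ∑ j, (R *ᵥ u j) ⬝ᵥ (R *ᵥ u j) = ∑ j, ∑ k, ((R *ᵥ u j) k)^2 := by
        simp [dotProduct, pow_two]
    _ = ∑ k, ∑ j, ((R *ᵥ u j) k)^2 := Finset.sum_comm
    _ ≤ ∑ k, ∑ i, (R k i)^2 := Finset.sum_le_sum fun k _ => key k
    _ = (R * R).trace := by
        conv_rhs => rw [← hR]
        simp [Matrix.trace, Matrix.diag, Matrix.mul_apply, Matrix.transpose_apply, pow_two]
        exact Finset.sum_congr rfl fun x _ => Finset.sum_congr rfl fun y _ => by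
          rw [show R y x = R x y from (congrFun (congrFun hR y) x).symm.trans
            (Matrix.transpose_apply R y x)]

end Helpers

/-- for a symmetric positive definite `Λ ∈ ℝ^{m×m}` and any `G ∈ ℝ^{m×n}`,
`‖G‖_* ≤ sqrt(‖Λ‖_* · tr(Gᵀ Λ⁻¹ G))` where `‖Λ‖_* = tr(Λ)`. -/
theorem stmt9 (m n : ℕ) (Λ : Matrix (Fin m) (Fin m) ℝ) (hΛ : Λ.PosDef)
    (G : Matrix (Fin m) (Fin n) ℝ) :
    nuclearNorm G ≤ Real.sqrt (nuclearNorm Λ * (Gᵀ * Λ⁻¹ * G).trace) := by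
  classical
  have hΛps : Λ.PosSemidef := hΛ.posSemidef
  have hΛsymm : Λᵀ = Λ := by
    have := hΛ.1
    rwa [Matrix.IsHermitian, conjTranspose_eq_transpose_of_trivial] at this
  -- square root of Λ
  set R : Matrix (Fin m) (Fin m) ℝ := psdSqrt Λ with hRdef
  have hRps : R.PosSemidef := psdSqrt_posSemidef hΛps
  have hRR : R * R = Λ := psdSqrt_mul_self hΛps
  have hRsymm : Rᵀ = R := by
    have := hRps.1
    rwa [Matrix.IsHermitian, conjTranspose_eq_transpose_of_trivial] at this
  have hdet : IsUnit R.det := by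
    have h1 : R.det * R.det = Λ.det := by rw [← Matrix.det_mul, hRR]
    have h2 : Λ.det ≠ 0 := hΛ.det_pos.ne'
    exact isUnit_iff_ne_zero.mpr fun h => h2 (by rw [← h1, h, mul_zero])
  set Q : Matrix (Fin m) (Fin m) ℝ := R⁻¹ with hQdef
  have hRQ : R * Q = 1 := Matrix.mul_nonsing_inv R hdet
  have hQsymm : Qᵀ = Q := by rw [hQdef, Matrix.transpose_nonsing_inv, hRsymm]
  have hQQ : Q * Q = Λ⁻¹ := by rw [← hRR, Matrix.mul_inv_rev]
  -- nuclearNorm Λ = tr Λ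
  have hΛtr : nuclearNorm Λ = Λ.trace := by
    have hps : (Λᵀ * Λ).PosSemidef := by
      rw [hΛsymm, ← pow_two]
      exact hΛps.pow 2
    rw [nuclearNorm]
    rw [← eq_psdSqrt_of_sq_eq hΛps hps (by rw [pow_two, hΛsymm])]
  -- the matrix H = Gᵀ G and its square root S
  have hH : (Gᵀ * G).PosSemidef := by
    have := Matrix.posSemidef_conjTranspose_mul_self G
    rwa [conjTranspose_eq_transpose_of_trivial] at this
  set S : Matrix (Fin n) (Fin n) ℝ := psdSqrt (Gᵀ * G) with hSdef
  have hSps : S.PosSemidef := psdSqrt_posSemidef hH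
  have hSS : S * S = Gᵀ * G := psdSqrt_mul_self hH
  have hSh : S.IsHermitian := hSps.1
  have hnG : nuclearNorm G = S.trace := by
    rw [nuclearNorm]
  -- spectral data of S
  set ν : Fin n → ℝ := hSh.eigenvalues with hνdef
  have hν0 : ∀ j, 0 ≤ ν j := hSps.eigenvalues_nonneg
  set V : Matrix (Fin n) (Fin n) ℝ := (hSh.eigenvectorUnitary : Matrix (Fin n) (Fin n) ℝ) with hVdef
  set v : Fin n → (Fin n → ℝ) := fun j i => V i j with hvdef
  have hVorth : Vᵀ * V = 1 := by
    have := (hSh.eigenvectorUnitary).2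
    have h := this.1
    rwa [Matrix.star_eq_conjTranspose, conjTranspose_eq_transpose_of_trivial] at h
  have hvv : ∀ i j, v i ⬝ᵥ v j = if i = j then 1 else 0 := by
    intro i j
    have := congrFun (congrFun hVorth i) j
    simpa [Matrix.mul_apply, Matrix.transpose_apply, dotProduct, Matrix.one_apply,
      hvdef] using this
  have hSv : ∀ j, S *ᵥ v j = ν j • v j := by
    intro j
    have h := hSh.mulVec_eigenvectorBasis j
    have hv : v j = ⇑(hSh.eigenvectorBasis j) := by
      funext i
      simp [hvdef, hVdef]
    rw [hv]; exact h
  -- trace S = ∑ ν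
  have htrS : S.trace = ∑ j, ν j := by
    rw [← trace_eq_sum_col V hVorth S]
    apply Finset.sum_congr rfl
    intro j _
    have : (fun i => V i j) = v j := by funext i; rfl
    rw [this, hSv j, dotProduct_smul, smul_eq_mul]
    have h1 : v j ⬝ᵥ v j = 1 := by rw [hvv j j]; simp
    rw [h1, mul_one]
  -- the vectors x j = G v j
  set x : Fin n → (Fin m → ℝ) := fun j => G *ᵥ v j with hxdef
  have hGtx : ∀ j, Gᵀ *ᵥ x j = (ν j * ν j) • v j := by
    intro j
    rw [hxdef]
    show Gᵀ *ᵥ (G *ᵥ v j) = _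
    rw [Matrix.mulVec_mulVec, ← hSS, ← Matrix.mulVec_mulVec, hSv j, Matrix.mulVec_smul, hSv j,
      smul_smul]
  have hxx : ∀ i j, x i ⬝ᵥ x j = (ν j * ν j) * (if i = j then 1 else 0) := by
    intro i j
    calc x i ⬝ᵥ x j = x i ⬝ᵥ (G *ᵥ v j) := rfl
      _ = (Gᵀ *ᵥ x i) ⬝ᵥ v j := by
          rw [Matrix.dotProduct_mulVec, ← Matrix.mulVec_transpose]
      _ = ((ν i * ν i) • v i) ⬝ᵥ v j := by rw [hGtx i]
      _ = (ν i * ν i) * (v i ⬝ᵥ v j) := by rw [smul_dotProduct, smul_eq_mul]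
      _ = (ν j * ν j) * (if i = j then 1 else 0) := by
          rw [hvv i j]
          by_cases h : i = j
          · subst h; simp
          · simp [h]
  -- vectors u j
  set u : Fin n → (Fin m → ℝ) := fun j => if ν j = 0 then 0 else (ν j)⁻¹ • x j with hudef
  set a : Fin n → ℝ := fun j => Real.sqrt ((R *ᵥ u j) ⬝ᵥ (R *ᵥ u j)) with hadef
  set b : Fin n → ℝ := fun j => Real.sqrt ((Q *ᵥ x j) ⬝ᵥ (Q *ᵥ x j)) with hbdef
  -- per-index Cauchy-Schwarz
  have step1 : ∀ j, ν j ≤ a j * b j := by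
    intro j
    by_cases h : ν j = 0
    · rw [h]
      exact mul_nonneg (Real.sqrt_nonneg _) (Real.sqrt_nonneg _)
    · have hu : u j = (ν j)⁻¹ • x j := by rw [hudef]; simp [h]
      have hkey : (R *ᵥ u j) ⬝ᵥ (Q *ᵥ x j) = ν j := by
        rw [dotProduct_comm, Matrix.dotProduct_mulVec (Q *ᵥ x j) R (u j),
          ← Matrix.mulVec_transpose, hRsymm, Matrix.mulVec_mulVec, hRQ, Matrix.one_mulVec,
          hu, dotProduct_smul, smul_eq_mul]
        have := hxx j j
        simp only [if_pos rfl, ↓reduceIte, mul_one] at this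
        rw [this]
        field_simp
      calc ν j = (R *ᵥ u j) ⬝ᵥ (Q *ᵥ x j) := hkey.symm
        _ ≤ a j * b j := dot_le_sqrt _ _
  -- sum of b² is the trace of GᵀΛ⁻¹G
  have step2 : ∑ j, (b j)^2 = (Gᵀ * Λ⁻¹ * G).trace := by
    rw [← trace_eq_sum_col V hVorth (Gᵀ * Λ⁻¹ * G)]
    apply Finset.sum_congr rfl
    intro j _
    have hcol : (fun i => V i j) = v j := by funext i; rfl
    rw [hbdef]
    have hb2 : (Real.sqrt ((Q *ᵥ x j) ⬝ᵥ (Q *ᵥ x j)))^2 = (Q *ᵥ x j) ⬝ᵥ (Q *ᵥ x j) :=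
      Real.sq_sqrt (dot_self_nonneg' _)
    rw [hcol]
    show Real.sqrt ((Q *ᵥ x j) ⬝ᵥ (Q *ᵥ x j)) ^ 2 = v j ⬝ᵥ ((Gᵀ * Λ⁻¹ * G) *ᵥ v j)
    rw [hb2]
    rw [Matrix.dotProduct_mulVec (Q *ᵥ x j) Q (x j), ← Matrix.mulVec_transpose, hQsymm,
      Matrix.mulVec_mulVec, hQQ]
    rw [← Matrix.mulVec_mulVec, ← Matrix.mulVec_mulVec]
    show (Λ⁻¹ *ᵥ x j) ⬝ᵥ x j = v j ⬝ᵥ (Gᵀ *ᵥ (Λ⁻¹ *ᵥ (G *ᵥ v j)))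
    rw [Matrix.dotProduct_mulVec (v j) Gᵀ _, ← Matrix.mulVec_transpose, Matrix.transpose_transpose]
    rw [dotProduct_comm]
  -- sum of a² is at most tr Λ
  have step3 : ∑ j, (a j)^2 ≤ Λ.trace := by
    have ha2 : ∀ j, (a j)^2 = (R *ᵥ u j) ⬝ᵥ (R *ᵥ u j) := fun j =>
      Real.sq_sqrt (dot_self_nonneg' _)
    have hzero : ∀ j, ν j = 0 → (a j)^2 = 0 := by
      intro j h
      rw [ha2, hudef]
      simp [h]
    have horth : ∀ i j : {j : Fin n // ν j ≠ 0},
        u i.1 ⬝ᵥ u j.1 = if i = j then 1 else 0 := by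
      rintro ⟨i, hi⟩ ⟨j, hj⟩
      rw [hudef]
      simp only [if_neg hi, if_neg hj]
      rw [smul_dotProduct, dotProduct_smul, hxx i j, smul_eq_mul, smul_eq_mul]
      by_cases h : i = j
      · subst h
        rw [if_pos rfl, if_pos rfl, mul_one]
        field_simp
      · rw [if_neg h, if_neg (fun hc => h (Subtype.mk_eq_mk.mp hc)), mul_zero, mul_zero,
          mul_zero]
    have horth' : ∀ i j : {j : Fin n // ν j ≠ 0},
        u i.1 ⬝ᵥ u j.1 = if i = j then 1 else 0 := horth
    have hbessel := bessel_matrix R hRsymm (fun j : {j : Fin n // ν j ≠ 0} => u j.1) horth'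
    rw [hRR] at hbessel
    calc ∑ j, (a j)^2 = ∑ j ∈ Finset.univ.filter (fun j => ν j ≠ 0), (a j)^2 := by
          symm
          apply Finset.sum_filter_of_ne
          intro j _ hne
          intro h
          exact hne (hzero j h)
      _ = ∑ j : {j : Fin n // ν j ≠ 0}, (a j.1)^2 := by
          rw [← Finset.sum_subtype (Finset.univ.filter (fun j => ν j ≠ 0))
            (fun j => by simp) (fun j => (a j)^2)]
      _ ≤ Λ.trace := by
          calc ∑ j : {j : Fin n // ν j ≠ 0}, (a j.1)^2
              = ∑ j : {j : Fin n // ν j ≠ 0}, (R *ᵥ u j.1) ⬝ᵥ (R *ᵥ u j.1) := by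
                exact Finset.sum_congr rfl fun j _ => ha2 j.1
            _ ≤ Λ.trace := hbessel
  -- put everything together
  have htrΛ : 0 ≤ Λ.trace := le_trans (Finset.sum_nonneg fun j _ => sq_nonneg (a j)) step3
  have hfinal : ∑ j, ν j ≤ Real.sqrt (Λ.trace * (Gᵀ * Λ⁻¹ * G).trace) := by
    calc ∑ j, ν j ≤ ∑ j, a j * b j := Finset.sum_le_sum fun j _ => step1 j
      _ ≤ Real.sqrt (a ⬝ᵥ a) * Real.sqrt (b ⬝ᵥ b) := dot_le_sqrt a b
      _ ≤ Real.sqrt Λ.trace * Real.sqrt ((Gᵀ * Λ⁻¹ * G).trace) := by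
          apply mul_le_mul
          · apply Real.sqrt_le_sqrt
            calc a ⬝ᵥ a = ∑ j, (a j)^2 := by simp [dotProduct, pow_two]
              _ ≤ Λ.trace := step3
          · apply Real.sqrt_le_sqrt
            have hbb : b ⬝ᵥ b = (Gᵀ * Λ⁻¹ * G).trace := by
              rw [← step2]; simp [dotProduct, pow_two]
            rw [hbb]
          · exact Real.sqrt_nonneg _
          · exact Real.sqrt_nonneg _
      _ = Real.sqrt (Λ.trace * (Gᵀ * Λ⁻¹ * G).trace) := (Real.sqrt_mul htrΛ _).symm
  rw [hnG, htrS, hΛtr]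
  exact hfinal
end
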